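/- Let p > 2, and let (Θ̄_n)_{n ≥ n₀} be a process with increments that can be decomposed dyadically as follows: suppose for every pair 0 ≤ k ≤ ℓ the centered increment Θ̄_{k,ℓ} := Θ̄_ℓ − Θ̄_k − E[Θ̄_ℓ − Θ̄_k] satisfies E[|Θ̄_{k,ℓ}|^p]^{2/p} ≤ κ² γ² (ℓ−k) C² for constants κ, γ, C > 0. Then for every N ≥ 0, E[max_{n=0,...,N} |Θ̄_{0,n}|^p]^{1/p} ≤ (1 − 2^{−(1/2 − 1/p)})^{−1} κ γ C √N. -/

import Mathlib

open MeasureTheory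
open scoped ENNReal NNReal

private lemma aux_sup'_aemeasurable {Ω : Type*} [MeasurableSpace Ω] {μ : Measure Ω}
    (f : ℕ → Ω → ℝ) (hf : ∀ n, AEMeasurable (f n) μ) (s : Finset ℕ) (hs : s.Nonempty) :
    AEMeasurable (fun ω => s.sup' hs (fun n => f n ω)) μ := by
  induction hs using Finset.Nonempty.cons_induction with
  | singleton a => simpa using hf a
  | cons a s ha hs ih =>
    have : (fun ω => (Finset.cons a s ha).sup' (Finset.cons_nonempty ha) (fun n => f n ω))
        = fun ω => max (f a ω) (s.sup' hs (fun n => f n ω)) := by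
      funext ω; exact Finset.sup'_cons (f := fun n => f n ω) hs
    rw [this]
    exact (hf a).max ih

/-- dyadic chaining bound. For a process `Θ` whose centered increments
`D k ℓ := Θ ℓ − Θ k − E[Θ ℓ − Θ k]` satisfy `E[|D k ℓ|^p]^{2/p} ≤ κ²γ²(ℓ−k)C²` for all
`k ≤ ℓ`, one has `E[max_{n≤N} |D 0 n|^p]^{1/p} ≤ (1 − 2^{−(1/2−1/p)})⁻¹ κ γ C √N`. -/
theorem stmt15_dyadic_chaining
    {Ω : Type*} [MeasurableSpace Ω] (μ : Measure Ω) [IsProbabilityMeasure μ]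
    (p κ γ C : ℝ) (hp : 2 < p) (hκ : 0 < κ) (hγ : 0 < γ) (hC : 0 < C)
    (Θ : ℕ → Ω → ℝ) (hint : ∀ n, Integrable (Θ n) μ)
    (D : ℕ → ℕ → Ω → ℝ)
    (hD : ∀ k ℓ : ℕ, ∀ ω : Ω,
      D k ℓ ω = Θ ℓ ω - Θ k ω - ∫ ω', (Θ ℓ ω' - Θ k ω') ∂μ)
    (hDint : ∀ k ℓ : ℕ, Integrable (fun ω => |D k ℓ ω| ^ p) μ)
    (hbound : ∀ k ℓ : ℕ, k ≤ ℓ →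
      (∫ ω, |D k ℓ ω| ^ p ∂μ) ^ (2 / p) ≤ κ ^ 2 * γ ^ 2 * ((ℓ : ℝ) - k) * C ^ 2)
    (N : ℕ)
    (hmaxint : Integrable
      (fun ω => (⨆ n ∈ Finset.range (N + 1), |D 0 n ω|) ^ p) μ) :
    (∫ ω, (⨆ n ∈ Finset.range (N + 1), |D 0 n ω|) ^ p ∂μ) ^ (1 / p)
      ≤ (1 - (2 : ℝ) ^ (-(1 / 2 - 1 / p)))⁻¹ * κ * γ * C * Real.sqrt N := by
  have hp0 : (0:ℝ) < p := by linarith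
  have hp1 : (1:ℝ) ≤ p := by linarith
  -- the geometric ratio
  set s : ℝ := (2 : ℝ) ^ (-(1 / 2 - 1 / p)) with hsdef
  have hs0 : 0 < s := Real.rpow_pos_of_pos (by norm_num) _
  have hs1 : s < 1 := by
    apply Real.rpow_lt_one_of_one_lt_of_neg (by norm_num)
    have : 1 / p < 1 / 2 := by
      rw [div_lt_div_iff₀ hp0 (by norm_num)]; linarith
    linarith
  have hRHS0 : (0:ℝ) ≤ (1 - s)⁻¹ * κ * γ * C * Real.sqrt N := by
    have : (0:ℝ) ≤ (1-s)⁻¹ := inv_nonneg.mpr (by linarith)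
    positivity
  -- basic facts about D
  have hDalt : ∀ k ℓ (ω : Ω), D k ℓ ω =
      (Θ ℓ ω - ∫ ω', Θ ℓ ω' ∂μ) - (Θ k ω - ∫ ω', Θ k ω' ∂μ) := by
    intro k ℓ ω
    rw [hD, integral_sub (hint ℓ) (hint k)]; ring
  have hDadd : ∀ a b c (ω : Ω), D a b ω + D b c ω = D a c ω := by
    intro a b c ω; rw [hDalt, hDalt, hDalt]; ring
  have hDself : ∀ a (ω : Ω), D a a ω = 0 := by intro a ω; rw [hDalt]; ring
  -- the supremum process
  set F : Ω → ℝ := fun ω => ⨆ n ∈ Finset.range (N + 1), |D 0 n ω| with hFdef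
  have hFnonneg : ∀ ω, 0 ≤ F ω :=
    fun ω => Real.iSup_nonneg fun n => Real.iSup_nonneg fun _ => abs_nonneg _
  -- trivial case N = 0
  rcases Nat.eq_zero_or_pos N with hN | hN
  · subst hN
    have hF0 : ∀ ω, F ω = 0 := by
      intro ω
      refine le_antisymm (Real.iSup_le (fun n => Real.iSup_le (fun hn => ?_) le_rfl) le_rfl)
        (hFnonneg ω)
      have : n = 0 := by simpa using hn
      subst this
      rw [hDself]; simp
    have : (∫ ω, F ω ^ p ∂μ) = 0 := by
      have : ∀ ω, F ω ^ p = 0 := fun ω => by rw [hF0, Real.zero_rpow hp0.ne']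
      simp [this]
    rw [this, Real.zero_rpow (by positivity : (1:ℝ)/p ≠ 0)]
    simpa using hRHS0
  -- main case
  set q : ℝ≥0∞ := ENNReal.ofReal p with hqdef
  have hq0 : q ≠ 0 := by
    simp only [hqdef, ne_eq, ENNReal.ofReal_eq_zero, not_le]; linarith
  have hqt : q ≠ ⊤ := ENNReal.ofReal_ne_top
  have hqr : q.toReal = p := ENNReal.toReal_ofReal hp0.le
  have hq1 : 1 ≤ q := by
    rw [hqdef, ← ENNReal.ofReal_one]; exact ENNReal.ofReal_le_ofReal hp1
  have hDsm : ∀ k ℓ, AEStronglyMeasurable (D k ℓ) μ := by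
    intro k ℓ
    have h : D k ℓ = fun ω =>
        (Θ ℓ ω - ∫ ω', Θ ℓ ω' ∂μ) - (Θ k ω - ∫ ω', Θ k ω' ∂μ) := funext (hDalt k ℓ)
    rw [h]
    exact ((hint ℓ).1.sub aestronglyMeasurable_const).sub
      ((hint k).1.sub aestronglyMeasurable_const)
  have hmem : ∀ f : Ω → ℝ, AEStronglyMeasurable f μ →
      Integrable (fun ω => |f ω| ^ p) μ → MemLp f q μ := by
    intro f hsm hintf
    refine (memLp_norm_rpow_iff (q := q) (p := q) hsm hq0 hqt).mp ?_
    rw [ENNReal.div_self hq0 hqt, memLp_one_iff_integrable]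
    simp only [hqr, Real.norm_eq_abs]
    exact hintf
  -- integral bound from hbound
  have hIbound : ∀ k ℓ, k ≤ ℓ →
      (∫ ω, |D k ℓ ω| ^ p ∂μ) ≤ (κ * γ * C) ^ p * ((ℓ:ℝ) - k) ^ (p/2) := by
    intro k ℓ hkl
    have hI0 : 0 ≤ ∫ ω, |D k ℓ ω| ^ p ∂μ :=
      integral_nonneg fun ω => Real.rpow_nonneg (abs_nonneg _) _
    have hx0 : (0:ℝ) ≤ (ℓ:ℝ) - k := by
      have := (Nat.cast_le (α := ℝ)).mpr hkl; linarith
    have h1 : (∫ ω, |D k ℓ ω| ^ p ∂μ)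
        = ((∫ ω, |D k ℓ ω| ^ p ∂μ) ^ (2/p)) ^ (p/2) := by
      rw [← Real.rpow_mul hI0]
      have h12 : 2/p*(p/2) = 1 := by field_simp
      rw [h12, Real.rpow_one]
    rw [h1]
    have h2 := Real.rpow_le_rpow (Real.rpow_nonneg hI0 _) (hbound k ℓ hkl)
      (by positivity : (0:ℝ) ≤ p/2)
    refine h2.trans_eq ?_
    have h3 : κ ^ 2 * γ ^ 2 * ((ℓ:ℝ) - k) * C ^ 2 = (κ*γ*C)^2 * ((ℓ:ℝ) - k) := by ring
    rw [h3, Real.mul_rpow (by positivity) hx0]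
    congr 1
    rw [← Real.rpow_natCast (κ*γ*C) 2, ← Real.rpow_mul (by positivity)]
    congr 1
    push_cast; ring
  -- dyadic setup
  set m := N.size with hmdef
  have hm0 : 0 < m := Nat.size_pos.mpr hN
  have hNlt : N < 2 ^ m := Nat.lt_size_self N
  have hm1 : 2 ^ (m-1) ≤ N := by
    by_contra h
    push_neg at h
    have := Nat.size_le.mpr h
    omega
  -- the layer maxima (in ℓ^p form)
  set G : ℕ → Ω → ℝ := fun k ω =>
    (∑ t ∈ Finset.range (2^k),
      |D (t * 2^(m-k)) (t * 2^(m-k) + 2^(m-1-k)) ω| ^ p) ^ (1/p) with hGdef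
  have hGnonneg : ∀ k ω, 0 ≤ G k ω := fun k ω =>
    Real.rpow_nonneg (Finset.sum_nonneg fun t _ => Real.rpow_nonneg (abs_nonneg _) p) _
  -- pointwise chaining bound
  have hchain : ∀ n, n ≤ N → ∀ ω, |D 0 n ω| ≤ ∑ k ∈ Finset.range m, G k ω := by
    intro n hn ω
    set e : ℕ → ℕ := fun k => 2^(m-k) * (n / 2^(m-k)) with hedef
    have he0 : e 0 = 0 := by
      simp only [hedef, Nat.sub_zero]
      rw [Nat.div_eq_of_lt (lt_of_le_of_lt hn hNlt), mul_zero]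
    have hem : e m = n := by simp [hedef]
    have htel : ∀ j, D (e 0) (e j) ω = ∑ k ∈ Finset.range j, D (e k) (e (k+1)) ω := by
      intro j; induction j with
      | zero => simpa using hDself (e 0) ω
      | succ j ih => rw [Finset.sum_range_succ, ← ih, hDadd]
    have key : |D 0 n ω| ≤ ∑ k ∈ Finset.range m, |D (e k) (e (k+1)) ω| := by
      calc |D 0 n ω| = |∑ k ∈ Finset.range m, D (e k) (e (k+1)) ω| := by
            rw [← htel, he0, hem]
        _ ≤ _ := Finset.abs_sum_le_sum_abs _ _
    refine key.trans (Finset.sum_le_sum fun k hk => ?_)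
    have hk' : k < m := Finset.mem_range.mp hk
    have hmk : m - k = (m-1-k) + 1 := by omega
    have hstep : e (k+1) = e k + n / 2^(m-1-k) % 2 * 2^(m-1-k) := by
      have h1 : m - (k+1) = m - 1 - k := by omega
      have h2 : e k = 2^(m-1-k) * 2 * (n / 2^(m-1-k) / 2) := by
        simp only [hedef, hmk, pow_succ, Nat.div_div_eq_div_mul]
      rw [h2]
      simp only [hedef, h1]
      conv_lhs => rw [← Nat.div_add_mod (n / 2^(m-1-k)) 2]
      ring
    rcases Nat.mod_two_eq_zero_or_one (n / 2^(m-1-k)) with hb | hb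
    · rw [hstep, hb]
      simpa [hDself] using hGnonneg k ω
    · rw [hstep, hb, one_mul]
      have het : e k = (n / 2^(m-k)) * 2^(m-k) := by rw [hedef]; ring
      have ht : n / 2^(m-k) < 2^k := by
        rw [Nat.div_lt_iff_lt_mul (Nat.pow_pos (by norm_num))]
        calc n < 2^m := lt_of_le_of_lt hn hNlt
          _ = 2^k * 2^(m-k) := by rw [← pow_add]; congr 1; omega
      have h1 : |D (e k) (e k + 2^(m-1-k)) ω|
          = (|D (e k) (e k + 2^(m-1-k)) ω| ^ p) ^ (1/p) := by
        rw [← Real.rpow_mul (abs_nonneg _), mul_one_div, div_self hp0.ne', Real.rpow_one]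
      rw [h1, het, hGdef]
      apply Real.rpow_le_rpow (Real.rpow_nonneg (abs_nonneg _) _) ?_ (by positivity)
      exact Finset.single_le_sum (f := fun t =>
          |D (t * 2^(m-k)) (t * 2^(m-k) + 2^(m-1-k)) ω| ^ p)
        (fun i _ => Real.rpow_nonneg (abs_nonneg _) _) (Finset.mem_range.mpr ht)
  -- pointwise bound on F
  have hsum_nonneg : ∀ ω, (0:ℝ) ≤ ∑ k ∈ Finset.range m, G k ω :=
    fun ω => Finset.sum_nonneg fun k _ => hGnonneg k ω
  have hFle : ∀ ω, F ω ≤ ∑ k ∈ Finset.range m, G k ω := by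
    intro ω
    refine Real.iSup_le (fun n => Real.iSup_le (fun hn => ?_) (hsum_nonneg ω)) (hsum_nonneg ω)
    exact hchain n (Nat.lt_succ_iff.mp (Finset.mem_range.mp hn)) ω
  -- measurability of F
  have habs : ∀ n, AEMeasurable (fun ω => |D 0 n ω|) μ :=
    fun n => continuous_abs.measurable.comp_aemeasurable (hDsm 0 n).aemeasurable
  have hne : (Finset.range (N+1)).Nonempty := ⟨0, by simp⟩
  have hsup'eq : ∀ ω, F ω = (Finset.range (N+1)).sup' hne (fun n => |D 0 n ω|) := by
    intro ω
    have hs0 : (0:ℝ) ≤ (Finset.range (N+1)).sup' hne (fun n => |D 0 n ω|) :=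
      le_trans (abs_nonneg (D 0 0 ω))
        (Finset.le_sup' (fun n => |D 0 n ω|) (by simp : 0 ∈ Finset.range (N+1)))
    refine le_antisymm
      (Real.iSup_le (fun n => Real.iSup_le (fun hn => Finset.le_sup' (fun n => |D 0 n ω|) hn) hs0) hs0) ?_
    apply Finset.sup'_le
    intro n hn
    have h1 : (⨆ _ : n ∈ Finset.range (N+1), |D 0 n ω|) = |D 0 n ω| := ciSup_pos hn
    rw [← h1]
    have hbdd : BddAbove (Set.range fun n => ⨆ _ : n ∈ Finset.range (N+1), |D 0 n ω|) := by
      refine ⟨(Finset.range (N+1)).sup' hne (fun n => |D 0 n ω|), ?_⟩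
      rintro x ⟨n', rfl⟩
      exact Real.iSup_le (fun hn' => Finset.le_sup' (fun n => |D 0 n ω|) hn') hs0
    exact le_ciSup hbdd n
  have hFsm : AEStronglyMeasurable F μ := by
    have h := aux_sup'_aemeasurable (fun n ω => |D 0 n ω|) habs (Finset.range (N+1)) hne
    exact h.aestronglyMeasurable.congr
      (Filter.Eventually.of_forall fun ω => (hsup'eq ω).symm)
  -- measurability and integrability of G
  have hGsm : ∀ k, AEStronglyMeasurable (G k) μ := by
    intro k
    apply AEMeasurable.aestronglyMeasurable
    apply AEMeasurable.pow _ aemeasurable_const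
    exact Finset.aemeasurable_fun_sum _ fun t _ =>
      ((continuous_abs.measurable.comp_aemeasurable (hDsm _ _).aemeasurable).pow
        aemeasurable_const)
  have hGp : ∀ k ω, |G k ω| ^ p = ∑ t ∈ Finset.range (2^k),
      |D (t * 2^(m-k)) (t * 2^(m-k) + 2^(m-1-k)) ω| ^ p := by
    intro k ω
    rw [abs_of_nonneg (hGnonneg k ω), hGdef]
    rw [← Real.rpow_mul (Finset.sum_nonneg fun t _ => Real.rpow_nonneg (abs_nonneg _) p),
      one_div, inv_mul_cancel₀ hp0.ne', Real.rpow_one]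
  have hGint : ∀ k, Integrable (fun ω => |G k ω| ^ p) μ := by
    intro k
    have : (fun ω => |G k ω| ^ p) = fun ω => ∑ t ∈ Finset.range (2^k),
        |D (t * 2^(m-k)) (t * 2^(m-k) + 2^(m-1-k)) ω| ^ p := funext (hGp k)
    rw [this]
    exact integrable_finset_sum _ fun t _ => hDint _ _
  have hGmem : ∀ k, MemLp (G k) q μ := fun k => hmem _ (hGsm k) (hGint k)
  have hFmem : MemLp F q μ := by
    refine hmem F hFsm (hmaxint.congr (Filter.Eventually.of_forall fun ω => ?_))
    show (⨆ n ∈ Finset.range (N + 1), |D 0 n ω|) ^ p = |F ω| ^ p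
    rw [abs_of_nonneg (hFnonneg ω)]
  -- eLpNorm chain
  have hchain2 : eLpNorm F q μ ≤ ∑ k ∈ Finset.range m, eLpNorm (G k) q μ := by
    calc eLpNorm F q μ ≤ eLpNorm (fun ω => ∑ k ∈ Finset.range m, G k ω) q μ := by
          apply eLpNorm_mono_real
          intro ω; rw [Real.norm_eq_abs, abs_of_nonneg (hFnonneg ω)]; exact hFle ω
      _ = eLpNorm (∑ k ∈ Finset.range m, G k) q μ := by
          congr 1; funext ω; simp [Finset.sum_apply]
      _ ≤ _ := eLpNorm_sum_le (fun k _ => hGsm k) hq1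
  -- value of eLpNorm
  have hFval : eLpNorm F q μ = ENNReal.ofReal ((∫ ω, F ω ^ p ∂μ) ^ (1/p)) := by
    rw [hFmem.eLpNorm_eq_integral_rpow_norm hq0 hqt]
    congr 1
    rw [hqr, one_div]
    congr 1
    refine integral_congr_ae (Filter.Eventually.of_forall fun ω => ?_)
    show ‖F ω‖ ^ p = F ω ^ p
    rw [Real.norm_eq_abs, abs_of_nonneg (hFnonneg ω)]
  -- bound on each eLpNorm (G k)
  have hGbound : ∀ k, k < m → eLpNorm (G k) q μ
      ≤ ENNReal.ofReal (κ * γ * C * (2:ℝ) ^ (((m:ℝ)-1)/2) * s ^ k) := by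
    intro k hk
    rw [(hGmem k).eLpNorm_eq_integral_rpow_norm hq0 hqt]
    apply ENNReal.ofReal_le_ofReal
    rw [hqr]
    have hIG : (∫ ω, ‖G k ω‖ ^ p ∂μ) = ∑ t ∈ Finset.range (2^k),
        ∫ ω, |D (t * 2^(m-k)) (t * 2^(m-k) + 2^(m-1-k)) ω| ^ p ∂μ := by
      rw [← integral_finset_sum _ fun t _ => hDint _ _]
      refine integral_congr_ae (Filter.Eventually.of_forall fun ω => ?_)
      show ‖G k ω‖ ^ p = _
      rw [Real.norm_eq_abs]
      exact hGp k ω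
    have hterm : ∀ t, (∫ ω, |D (t * 2^(m-k)) (t * 2^(m-k) + 2^(m-1-k)) ω| ^ p ∂μ)
        ≤ (κ*γ*C)^p * ((2:ℝ)^(m-1-k) : ℝ) ^ (p/2) := by
      intro t
      have h := hIbound (t * 2^(m-k)) (t * 2^(m-k) + 2^(m-1-k)) (Nat.le_add_right _ _)
      refine h.trans_eq ?_
      congr 2
      push_cast
      ring
    have hIG2 : (∫ ω, ‖G k ω‖ ^ p ∂μ)
        ≤ (2:ℝ)^k * ((κ*γ*C)^p * ((2:ℝ)^(m-1-k) : ℝ) ^ (p/2)) := by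
      rw [hIG]
      calc ∑ t ∈ Finset.range (2^k), ∫ ω, |D (t * 2^(m-k)) (t * 2^(m-k) + 2^(m-1-k)) ω| ^ p ∂μ
          ≤ ∑ t ∈ Finset.range (2^k), (κ*γ*C)^p * ((2:ℝ)^(m-1-k) : ℝ) ^ (p/2) :=
            Finset.sum_le_sum fun t _ => hterm t
        _ = (2:ℝ)^k * ((κ*γ*C)^p * ((2:ℝ)^(m-1-k) : ℝ) ^ (p/2)) := by
            rw [Finset.sum_const, Finset.card_range, nsmul_eq_mul]
            push_cast
            ring
    have hInn : 0 ≤ ∫ ω, ‖G k ω‖ ^ p ∂μ :=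
      integral_nonneg fun ω => Real.rpow_nonneg (norm_nonneg _) _
    have h2 := Real.rpow_le_rpow hInn hIG2 (by positivity : (0:ℝ) ≤ p⁻¹)
    rw [← one_div] at h2 ⊢
    refine h2.trans_eq ?_
    have hmk : ((m-1-k : ℕ) : ℝ) = (m:ℝ) - 1 - k := by
      rw [Nat.cast_sub (by omega : k ≤ m - 1), Nat.cast_sub (by omega : 1 ≤ m), Nat.cast_one]
    have e1 : (2:ℝ)^k * ((κ*γ*C)^p * ((2:ℝ)^(m-1-k) : ℝ) ^ (p/2))
        = (κ*γ*C)^p * (2:ℝ) ^ ((k:ℝ) + ((m:ℝ)-1-(k:ℝ))*(p/2)) := by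
      rw [← Real.rpow_natCast (2:ℝ) k, ← Real.rpow_natCast (2:ℝ) (m-1-k),
        ← Real.rpow_mul (by norm_num : (0:ℝ) ≤ 2), hmk,
        Real.rpow_add (by norm_num : (0:ℝ) < 2)]
      ring
    have e2 : ((κ*γ*C)^p * (2:ℝ) ^ ((k:ℝ) + ((m:ℝ)-1-(k:ℝ))*(p/2))) ^ (1/p)
        = (κ*γ*C) * (2:ℝ) ^ (((k:ℝ) + ((m:ℝ)-1-(k:ℝ))*(p/2)) * (1/p)) := by
      rw [Real.mul_rpow (by positivity) (by positivity),
        ← Real.rpow_mul (by positivity : (0:ℝ) ≤ κ*γ*C),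
        ← Real.rpow_mul (by norm_num : (0:ℝ) ≤ 2),
        mul_one_div p p, div_self hp0.ne', Real.rpow_one]
    have e3 : (2:ℝ) ^ (((k:ℝ) + ((m:ℝ)-1-(k:ℝ))*(p/2)) * (1/p))
        = (2:ℝ) ^ (((m:ℝ)-1)/2) * s ^ k := by
      rw [hsdef, ← Real.rpow_natCast ((2:ℝ) ^ (-(1/2-1/p))) k,
        ← Real.rpow_mul (by norm_num : (0:ℝ) ≤ 2),
        ← Real.rpow_add (by norm_num : (0:ℝ) < 2)]
      congr 1
      field_simp
      ring
    rw [e1, e2, e3]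
    ring
  -- sum the geometric series
  have hgeom : ∑ k ∈ Finset.range m, s ^ k ≤ (1 - s)⁻¹ := by
    have h1 : (0:ℝ) < 1 - s := by linarith
    rw [geom_sum_eq hs1.ne]
    have h2 : (s ^ m - 1) / (s - 1) = (1 - s ^ m) / (1 - s) := by
      rw [div_eq_div_iff (by linarith : s - 1 ≠ 0) h1.ne']; ring
    rw [h2, div_le_iff₀ h1, inv_mul_cancel₀ h1.ne']
    have : (0:ℝ) ≤ s ^ m := by positivity
    linarith
  have hsqrt : (2:ℝ) ^ (((m:ℝ)-1)/2) ≤ Real.sqrt N := by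
    have h1 : ((2:ℕ)^(m-1) : ℝ) ≤ (N:ℝ) := by exact_mod_cast hm1
    have h2 : (2:ℝ) ^ (((m:ℝ)-1)/2) = Real.sqrt ((2:ℕ)^(m-1) : ℝ) := by
      rw [Real.sqrt_eq_rpow]
      push_cast
      rw [← Real.rpow_natCast (2:ℝ) (m-1), ← Real.rpow_mul (by norm_num)]
      congr 1
      have h3 : ((m-1 : ℕ) : ℝ) = (m:ℝ) - 1 := by
        rw [Nat.cast_sub (by omega : 1 ≤ m), Nat.cast_one]
      rw [h3]; ring
    rw [h2]
    exact Real.sqrt_le_sqrt h1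
  -- put everything together
  have hsum_bound : ∑ k ∈ Finset.range m, (κ * γ * C * (2:ℝ) ^ (((m:ℝ)-1)/2) * s ^ k)
      ≤ (1 - s)⁻¹ * κ * γ * C * Real.sqrt N := by
    rw [← Finset.mul_sum]
    calc κ * γ * C * (2:ℝ) ^ (((m:ℝ)-1)/2) * (∑ k ∈ Finset.range m, s ^ k)
        ≤ κ * γ * C * Real.sqrt N * (1 - s)⁻¹ := by
          apply mul_le_mul
          · exact mul_le_mul_of_nonneg_left hsqrt (by positivity)
          · exact hgeom
          · exact Finset.sum_nonneg fun k _ => by positivity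
          · positivity
      _ = (1 - s)⁻¹ * κ * γ * C * Real.sqrt N := by ring
  have hfinal : ENNReal.ofReal ((∫ ω, F ω ^ p ∂μ) ^ (1/p))
      ≤ ENNReal.ofReal ((1 - s)⁻¹ * κ * γ * C * Real.sqrt N) := by
    rw [← hFval]
    refine hchain2.trans ?_
    calc ∑ k ∈ Finset.range m, eLpNorm (G k) q μ
        ≤ ∑ k ∈ Finset.range m,
            ENNReal.ofReal (κ * γ * C * (2:ℝ) ^ (((m:ℝ)-1)/2) * s ^ k) :=
          Finset.sum_le_sum fun k hk => hGbound k (Finset.mem_range.mp hk)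
      _ = ENNReal.ofReal (∑ k ∈ Finset.range m,
            (κ * γ * C * (2:ℝ) ^ (((m:ℝ)-1)/2) * s ^ k)) := by
          rw [ENNReal.ofReal_sum_of_nonneg fun k _ => by positivity]
      _ ≤ _ := ENNReal.ofReal_le_ofReal hsum_bound
  have := (ENNReal.ofReal_le_ofReal_iff hRHS0).mp hfinal
  exact this
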